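/- Define the gain vector Gain ∈ [0,∞]^d coordinatewise by Gain_i = Σ_{k=0}^∞ q(γ_k ∂_i L_{B_k}(β_k)). If ‖γ_k ∇L_{B_k}(β_k)‖_∞ ≤ 1/2 for all k ≥ 0, then every coordinate of Gain is nonnegative and Σ_{k=0}^∞ γ_k² ‖∇L_{B_k}(β_k)‖₂² ≤ Σ_{i=1}^d Gain_i ≤ 2 Σ_{k=0}^∞ γ_k² ‖∇L_{B_k}(β_k)‖₂², where both sides may be infinite. -/
import Mathlib


open Finset Filter Real

noncomputable section

/-- Dot product on `Fin d → ℝ`. -/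
def dotp {d : ℕ} (u v : Fin d → ℝ) : ℝ := ∑ j, u j * v j

/-- Batch loss `L_B(β) = (1/(2|B|)) ∑_{i∈B} (⟨x_i,β⟩ − y_i)²`. -/
def batchLoss {d n : ℕ} (x : Fin n → Fin d → ℝ) (y : Fin n → ℝ)
    (B : Finset (Fin n)) (β : Fin d → ℝ) : ℝ :=
  (1 / (2 * (B.card : ℝ))) * ∑ i ∈ B, (dotp (x i) β - y i) ^ 2

/-- Gradient of the batch loss. -/
def gradBatch {d n : ℕ} (x : Fin n → Fin d → ℝ) (y : Fin n → ℝ)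
    (B : Finset (Fin n)) (β : Fin d → ℝ) : Fin d → ℝ :=
  fun j => (1 / (B.card : ℝ)) * ∑ i ∈ B, (dotp (x i) β - y i) * x i j

/-- SGD on the `(w₊, w₋)` parametrisation of the diagonal linear network. -/
def Witer {d n : ℕ} (x : Fin n → Fin d → ℝ) (y : Fin n → ℝ) (α : Fin d → ℝ)
    (γ : ℕ → ℝ) (Bk : ℕ → Finset (Fin n)) : ℕ → (Fin d → ℝ) × (Fin d → ℝ)
  | 0 => (α, α)
  | k + 1 =>
      let w := Witer x y α γ Bk k
      let β : Fin d → ℝ := fun j => ((w.1 j) ^ 2 - (w.2 j) ^ 2) / 2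
      let g := gradBatch x y (Bk k) β
      (fun j => (1 - γ k * g j) * w.1 j, fun j => (1 + γ k * g j) * w.2 j)

/-- The prediction iterates `β_k = ½(w_{+,k}² − w_{−,k}²)`. -/
def betaIter {d n : ℕ} (x : Fin n → Fin d → ℝ) (y : Fin n → ℝ) (α : Fin d → ℝ)
    (γ : ℕ → ℝ) (Bk : ℕ → Finset (Fin n)) (k : ℕ) : Fin d → ℝ :=
  fun j => ((Witer x y α γ Bk k).1 j ^ 2 - (Witer x y α γ Bk k).2 j ^ 2) / 2

/-- The stochastic gradient `∇L_{B_k}(β_k)` used at step `k`. -/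
def gIter {d n : ℕ} (x : Fin n → Fin d → ℝ) (y : Fin n → ℝ) (α : Fin d → ℝ)
    (γ : ℕ → ℝ) (Bk : ℕ → Finset (Fin n)) (k : ℕ) : Fin d → ℝ :=
  gradBatch x y (Bk k) (betaIter x y α γ Bk k)

def qplus (t : ℝ) : ℝ := -2 * t - Real.log ((1 - t) ^ 2)

def qminus (t : ℝ) : ℝ := 2 * t - Real.log ((1 + t) ^ 2)

def qfun (t : ℝ) : ℝ := -(1 / 2) * Real.log ((1 - t ^ 2) ^ 2)

/-- `α_{+,k}²` coordinatewise. -/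
def alphaPlusSq {d n : ℕ} (x : Fin n → Fin d → ℝ) (y : Fin n → ℝ) (α : Fin d → ℝ)
    (γ : ℕ → ℝ) (Bk : ℕ → Finset (Fin n)) (k : ℕ) : Fin d → ℝ :=
  fun j => (α j) ^ 2 * Real.exp (-(∑ ℓ ∈ Finset.range k, qplus (γ ℓ * gIter x y α γ Bk ℓ j)))

/-- `α_{−,k}²` coordinatewise. -/
def alphaMinusSq {d n : ℕ} (x : Fin n → Fin d → ℝ) (y : Fin n → ℝ) (α : Fin d → ℝ)
    (γ : ℕ → ℝ) (Bk : ℕ → Finset (Fin n)) (k : ℕ) : Fin d → ℝ :=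
  fun j => (α j) ^ 2 * Real.exp (-(∑ ℓ ∈ Finset.range k, qminus (γ ℓ * gIter x y α γ Bk ℓ j)))

/-- `α_k² = α_{+,k} ⊙ α_{−,k}` coordinatewise. -/
def alphaSq {d n : ℕ} (x : Fin n → Fin d → ℝ) (y : Fin n → ℝ) (α : Fin d → ℝ)
    (γ : ℕ → ℝ) (Bk : ℕ → Finset (Fin n)) (k : ℕ) : Fin d → ℝ :=
  fun j => Real.sqrt (alphaPlusSq x y α γ Bk k j * alphaMinusSq x y α γ Bk k j)

/-- `φ_k = ½ arcsinh((α_{+,k}² − α_{−,k}²)/(2α_k²))`. -/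
def phiK {d n : ℕ} (x : Fin n → Fin d → ℝ) (y : Fin n → ℝ) (α : Fin d → ℝ)
    (γ : ℕ → ℝ) (Bk : ℕ → Finset (Fin n)) (k : ℕ) : Fin d → ℝ :=
  fun j => (1 / 2) * Real.arsinh ((alphaPlusSq x y α γ Bk k j - alphaMinusSq x y α γ Bk k j) /
    (2 * alphaSq x y α γ Bk k j))

/-- Hyperbolic entropy `ψ_a`, expressed in terms of the squared scale `aSq = a²`. -/
def psiSq {d : ℕ} (aSq : Fin d → ℝ) (β : Fin d → ℝ) : ℝ :=
  (1 / 2) * ∑ j, (β j * Real.arsinh (β j / aSq j) - Real.sqrt ((β j) ^ 2 + (aSq j) ^ 2) + aSq j)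

/-- The time-varying potential `h_k(β) = ψ_{α_k}(β) − ⟨φ_k, β⟩`. -/
def hK {d n : ℕ} (x : Fin n → Fin d → ℝ) (y : Fin n → ℝ) (α : Fin d → ℝ)
    (γ : ℕ → ℝ) (Bk : ℕ → Finset (Fin n)) (k : ℕ) (β : Fin d → ℝ) : ℝ :=
  psiSq (alphaSq x y α γ Bk k) β - dotp (phiK x y α γ Bk k) β

/-- The gradient of `h_k`: `∇h_k(β) = ½ arcsinh(β/α_k²) − φ_k` coordinatewise. -/
def gradHK {d n : ℕ} (x : Fin n → Fin d → ℝ) (y : Fin n → ℝ) (α : Fin d → ℝ)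
    (γ : ℕ → ℝ) (Bk : ℕ → Finset (Fin n)) (k : ℕ) (β : Fin d → ℝ) : Fin d → ℝ :=
  fun j => (1 / 2) * Real.arsinh (β j / alphaSq x y α γ Bk k j) - phiK x y α γ Bk k j

/-- Bregman divergence of `h_k`. -/
def DhK {d n : ℕ} (x : Fin n → Fin d → ℝ) (y : Fin n → ℝ) (α : Fin d → ℝ)
    (γ : ℕ → ℝ) (Bk : ℕ → Finset (Fin n)) (k : ℕ) (β β' : Fin d → ℝ) : ℝ :=
  hK x y α γ Bk k β - hK x y α γ Bk k β' -
    dotp (gradHK x y α γ Bk k β') (fun j => β j - β' j)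

/-- Euclidean norm on `Fin d → ℝ`. -/
def norm2 {d : ℕ} (v : Fin d → ℝ) : ℝ := Real.sqrt (∑ j, v j ^ 2)

/-- ℓ¹ norm on `Fin d → ℝ`. -/
def l1norm {d : ℕ} (v : Fin d → ℝ) : ℝ := ∑ j, |v j|

/-- `H_B β = (1/|B|) ∑_{i∈B} ⟨x_i, β⟩ x_i`. -/
def HBop {d n : ℕ} (x : Fin n → Fin d → ℝ) (B : Finset (Fin n)) (β : Fin d → ℝ) : Fin d → ℝ :=
  fun j => (1 / (B.card : ℝ)) * ∑ i ∈ B, dotp (x i) β * x i j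


lemma qfun_bounds (t : ℝ) (ht : |t| ≤ 1 / 2) :
    t ^ 2 ≤ qfun t ∧ qfun t ≤ 2 * t ^ 2 := by
  have hs : t ^ 2 ≤ 1 / 4 := by nlinarith [sq_abs t, abs_nonneg t]
  have h1 : (0 : ℝ) < 1 - t ^ 2 := by nlinarith
  have hq : qfun t = -Real.log (1 - t ^ 2) := by
    unfold qfun
    rw [Real.log_pow]
    push_cast
    ring
  constructor
  · rw [hq]
    have := Real.log_le_sub_one_of_pos h1
    linarith
  · rw [hq]
    have h2 : (1 : ℝ) + 2 * t ^ 2 ≤ Real.exp (2 * t ^ 2) := by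
      have := Real.add_one_le_exp (2 * t ^ 2); linarith
    have hpos : (0 : ℝ) < 1 + 2 * t ^ 2 := by positivity
    have h3 : Real.exp (-(2 * t ^ 2)) ≤ (1 + 2 * t ^ 2)⁻¹ := by
      rw [Real.exp_neg]
      exact inv_anti₀ hpos h2
    have h4 : (1 + 2 * t ^ 2)⁻¹ ≤ 1 - t ^ 2 := by
      rw [inv_le_iff_one_le_mul₀ hpos]
      nlinarith
    have h5 : -(2 * t ^ 2) ≤ Real.log (1 - t ^ 2) :=
      (Real.le_log_iff_exp_le h1).2 (h3.trans h4)
    linarith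

/-- the gain vector `Gain_i = ∑_k q(γ_k ∂_i L_{B_k}(β_k))` (valued in `[0,∞]`) has
nonnegative coordinates and its total mass is within a factor `2` of
`∑_k γ_k²‖∇L_{B_k}(β_k)‖₂²`, both sides being possibly infinite. -/
theorem stmt7 (d n : ℕ) (x : Fin n → Fin d → ℝ) (y : Fin n → ℝ)
    (α : Fin d → ℝ) (hα : ∀ j, 0 < α j)
    (γ : ℕ → ℝ) (hγ : ∀ k, 0 ≤ γ k)
    (Bk : ℕ → Finset (Fin n)) (hBk : ∀ k, (Bk k).Nonempty)
    (hstep : ∀ k j, |γ k * gIter x y α γ Bk k j| ≤ 1 / 2) :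
    (∀ k j, 0 ≤ qfun (γ k * gIter x y α γ Bk k j)) ∧
    (∑' k : ℕ, ENNReal.ofReal (γ k ^ 2 * ∑ j, (gIter x y α γ Bk k j) ^ 2)) ≤
      (∑ i : Fin d, ∑' k : ℕ, ENNReal.ofReal (qfun (γ k * gIter x y α γ Bk k i))) ∧
    (∑ i : Fin d, ∑' k : ℕ, ENNReal.ofReal (qfun (γ k * gIter x y α γ Bk k i))) ≤
      2 * ∑' k : ℕ, ENNReal.ofReal (γ k ^ 2 * ∑ j, (gIter x y α γ Bk k j) ^ 2) := by
  set g := gIter x y α γ Bk with hg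
  have hb : ∀ k j, (γ k * g k j) ^ 2 ≤ qfun (γ k * g k j) ∧
      qfun (γ k * g k j) ≤ 2 * (γ k * g k j) ^ 2 := fun k j => qfun_bounds _ (hstep k j)
  have hnn : ∀ k j, 0 ≤ qfun (γ k * g k j) :=
    fun k j => le_trans (sq_nonneg _) (hb k j).1
  have hsplit : ∀ k : ℕ, ENNReal.ofReal (γ k ^ 2 * ∑ j, (g k j) ^ 2) =
      ∑ j : Fin d, ENNReal.ofReal ((γ k * g k j) ^ 2) := by
    intro k
    have : γ k ^ 2 * ∑ j, (g k j) ^ 2 = ∑ j : Fin d, (γ k * g k j) ^ 2 := by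
      rw [Finset.mul_sum]; exact Finset.sum_congr rfl fun j _ => by ring
    rw [this, ENNReal.ofReal_sum_of_nonneg (fun j _ => sq_nonneg _)]
  have hLHS : (∑' k : ℕ, ENNReal.ofReal (γ k ^ 2 * ∑ j, (g k j) ^ 2)) =
      ∑ j : Fin d, ∑' k : ℕ, ENNReal.ofReal ((γ k * g k j) ^ 2) := by
    rw [← Summable.tsum_finsetSum (fun j _ => ENNReal.summable)]
    exact tsum_congr hsplit
  refine ⟨hnn, ?_, ?_⟩
  · rw [hLHS]
    refine Finset.sum_le_sum fun j _ => ENNReal.tsum_le_tsum fun k => ?_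
    exact ENNReal.ofReal_le_ofReal (hb k j).1
  · rw [hLHS]
    calc (∑ i : Fin d, ∑' k : ℕ, ENNReal.ofReal (qfun (γ k * g k i)))
        ≤ ∑ i : Fin d, ∑' k : ℕ, 2 * ENNReal.ofReal ((γ k * g k i) ^ 2) := by
          refine Finset.sum_le_sum fun i _ => ENNReal.tsum_le_tsum fun k => ?_
          calc ENNReal.ofReal (qfun (γ k * g k i))
              ≤ ENNReal.ofReal (2 * (γ k * g k i) ^ 2) :=
                ENNReal.ofReal_le_ofReal (hb k i).2
            _ = 2 * ENNReal.ofReal ((γ k * g k i) ^ 2) := by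
                rw [ENNReal.ofReal_mul (by norm_num)]
                norm_num
      _ = 2 * ∑ i : Fin d, ∑' k : ℕ, ENNReal.ofReal ((γ k * g k i) ^ 2) := by
          rw [Finset.mul_sum]
          exact Finset.sum_congr rfl fun i _ => ENNReal.tsum_mul_left

end
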